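/- Define φd(ε)(id,iq) = Ld(id − 3εα₃₀Ld²id² − εα₁₂Lq²iq² − 4εα₄₀Ld³id³ − 2εα₂₂LdLq²id·iq²) and φq(ε)(id,iq) = Lq(iq − 2εα₁₂LdLq·id·iq − 2εα₂₂Ld²Lq·id²iq − 4εα₀₄Lq³iq³). Define the current maps Id(ε)(x,y) = x/Ld + 3εα₃₀x² + εα₁₂y² + 4εα₄₀x³ + 2εα₂₂xy² and Iq(ε)(x,y) = y/Lq + 2εα₁₂xy + 2εα₂₂x²y + 4εα₀₄y³. Then for fixed (id,iq), the functions ε ↦ Id(ε)(φd(ε), φq(ε)) − id and ε ↦ Iq(ε)(φd(ε), φq(ε)) − iq vanish at ε=0 together with their first derivatives at ε=0; i.e. the composition equals (id,iq) up to O(ε²). -/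

import Mathlib

set_option maxHeartbeats 4000000
set_option maxRecDepth 100000

private lemma quad_aux {f g : ℝ → ℝ} (hg : Differentiable ℝ g)
    (h : ∀ ε, f ε = ε ^ 2 * g ε) : f 0 = 0 ∧ deriv f 0 = 0 := by
  have hf : f = fun ε => ε ^ 2 * g ε := funext h
  constructor
  · simp [h 0]
  · rw [hf]
    exact ((hasDerivAt_pow 2 (0:ℝ)).mul (hg 0).hasDerivAt).deriv.trans (by simp)

/-- The approximate flux-current inversion of the saturated PMSM model is
correct to first order in the saturation coefficients: for fixed currents, the
composition of the current maps with the first-order flux maps equals the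
currents up to `O(ε²)` (value and first derivative in `ε` vanish at `ε = 0`). -/
theorem stmt_5 (Ld Lq α30 α12 α40 α22 α04 id_ iq_ : ℝ)
    (hLd : Ld ≠ 0) (hLq : Lq ≠ 0)
    (φd φq : ℝ → ℝ) (Id_ Iq_ : ℝ → ℝ → ℝ → ℝ)
    (hφd : ∀ ε, φd ε = Ld*(id_ - 3*ε*α30*Ld^2*id_^2 - ε*α12*Lq^2*iq_^2
      - 4*ε*α40*Ld^3*id_^3 - 2*ε*α22*Ld*Lq^2*id_*iq_^2))
    (hφq : ∀ ε, φq ε = Lq*(iq_ - 2*ε*α12*Ld*Lq*id_*iq_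
      - 2*ε*α22*Ld^2*Lq*id_^2*iq_ - 4*ε*α04*Lq^3*iq_^3))
    (hId : ∀ ε x y, Id_ ε x y = x/Ld + 3*ε*α30*x^2 + ε*α12*y^2
      + 4*ε*α40*x^3 + 2*ε*α22*x*y^2)
    (hIq : ∀ ε x y, Iq_ ε x y = y/Lq + 2*ε*α12*x*y + 2*ε*α22*x^2*y
      + 4*ε*α04*y^3) :
    ((fun ε => Id_ ε (φd ε) (φq ε) - id_) 0 = 0 ∧
      deriv (fun ε => Id_ ε (φd ε) (φq ε) - id_) 0 = 0) ∧
    ((fun ε => Iq_ ε (φd ε) (φq ε) - iq_) 0 = 0 ∧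
      deriv (fun ε => Iq_ ε (φd ε) (φq ε) - iq_) 0 = 0) := by
  set gd : ℝ → ℝ := fun ε => (-8)*Lq^5*α12*α04*iq_^4 + (16)*Lq^8*α12*α04^2*iq_^6*ε + (-4)*Ld*Lq^3*α12^2*id_*iq_^2 + (-2)*Ld*Lq^4*α12*α22*iq_^4 + (-16)*Ld*Lq^5*α22*α04*id_*iq_^4 + (16)*Ld*Lq^6*α12^2*α04*id_*iq_^4*ε + (16)*Ld*Lq^7*α12*α22*α04*iq_^6*ε + (32)*Ld*Lq^8*α22*α04^2*id_*iq_^6*ε + (-32)*Ld*Lq^10*α12*α22*α04^2*iq_^8*ε^2 + (-6)*Ld^2*Lq^2*α30*α12*id_*iq_^2 + (-12)*Ld^2*Lq^3*α12*α22*id_^2*iq_^2 + (-4)*Ld^2*Lq^4*α22^2*id_*iq_^4 + (4)*Ld^2*Lq^4*α12^3*id_^2*iq_^2*ε + (3)*Ld^2*Lq^4*α30*α12^2*iq_^4*ε + (8)*Ld^2*Lq^5*α12^2*α22*id_*iq_^4*ε + (48)*Ld^2*Lq^6*α12*α22*α04*id_^2*iq_^4*ε + (32)*Ld^2*Lq^7*α22^2*α04*id_*iq_^6*ε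 + (-32)*Ld^2*Lq^8*α12^2*α22*α04*id_*iq_^6*ε^2 + (-64)*Ld^2*Lq^10*α22^2*α04^2*id_*iq_^8*ε^2 + (-12)*Ld^3*Lq^2*α12*α40*id_^2*iq_^2 + (-18)*Ld^3*Lq^2*α30*α22*id_^2*iq_^2 + (-8)*Ld^3*Lq^3*α22^2*id_^3*iq_^2 + (16)*Ld^3*Lq^4*α12^2*α22*id_^3*iq_^2*ε + (12)*Ld^3*Lq^4*α12^2*α40*id_*iq_^4*ε + (12)*Ld^3*Lq^4*α30*α12*α22*id_*iq_^4*ε + (24)*Ld^3*Lq^5*α12*α22^2*id_^2*iq_^4*ε + (48)*Ld^3*Lq^5*α30*α22*α04*id_^2*iq_^4*ε + (32)*Ld^3*Lq^6*α22^2*α04*id_^3*iq_^4*ε + (-8)*Ld^3*Lq^6*α12^3*α22*id_^2*iq_^4*ε^2 + (-4)*Ld^3*Lq^6*α12^3*α40*iq_^6*ε^2 + (-96)*Ld^3*Lq^8*α12*α22^2*α04*id_^2*iq_^6*ε^2 + (-96)*Ld^3*Lq^8*α30*α22*α04^2*id_^2*iq_^6*ε^2 + (-18)*Ld^4*α30^2*id_^3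 + (-32)*Ld^4*Lq^2*α40*α22*id_^3*iq_^2 + (18)*Ld^4*Lq^2*α30^2*α12*id_^2*iq_^2*ε + (24)*Ld^4*Lq^3*α30*α12*α22*id_^3*iq_^2*ε + (20)*Ld^4*Lq^4*α12*α22^2*id_^4*iq_^2*ε + (48)*Ld^4*Lq^4*α12*α40*α22*id_^2*iq_^4*ε + (12)*Ld^4*Lq^4*α30*α22^2*id_^2*iq_^4*ε + (16)*Ld^4*Lq^5*α22^3*id_^3*iq_^4*ε + (64)*Ld^4*Lq^5*α40*α22*α04*id_^3*iq_^4*ε + (-32)*Ld^4*Lq^6*α12^2*α22^2*id_^3*iq_^4*ε^2 + (-24)*Ld^4*Lq^6*α12^2*α40*α22*id_*iq_^6*ε^2 + (-96)*Ld^4*Lq^6*α30*α12*α22*α04*id_^3*iq_^4*ε^2 + (-64)*Ld^4*Lq^8*α22^3*α04*id_^3*iq_^6*ε^2 + (-128)*Ld^4*Lq^8*α40*α22*α04^2*id_^3*iq_^6*ε^2 + (-60)*Ld^5*α30*α40*id_^4 + (96)*Ld^5*Lq^2*α30*α12*α40*id_^3*iq_^2*ε + (36)*Ld^5*Lq^2*α30^2*α22*id_^3*iq_^2*ε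 + (32)*Ld^5*Lq^3*α12*α40*α22*id_^4*iq_^2*ε + (24)*Ld^5*Lq^3*α30*α22^2*id_^4*iq_^2*ε + (8)*Ld^5*Lq^4*α22^3*id_^5*iq_^2*ε + (48)*Ld^5*Lq^4*α40*α22^2*id_^3*iq_^4*ε + (-24)*Ld^5*Lq^4*α30*α12^2*α22*id_^4*iq_^2*ε^2 + (-36)*Ld^5*Lq^4*α30*α12^2*α40*id_^2*iq_^4*ε^2 + (-40)*Ld^5*Lq^6*α12*α22^3*id_^4*iq_^4*ε^2 + (-128)*Ld^5*Lq^6*α12*α40*α22*α04*id_^4*iq_^4*ε^2 + (-48)*Ld^5*Lq^6*α12*α40*α22^2*id_^2*iq_^6*ε^2 + (-96)*Ld^5*Lq^6*α30*α22^2*α04*id_^4*iq_^4*ε^2 + (-48)*Ld^6*α40^2*id_^5 + (27)*Ld^6*α30^3*id_^4*ε + (96)*Ld^6*Lq^2*α12*α40^2*id_^4*iq_^2*ε + (192)*Ld^6*Lq^2*α30*α40*α22*id_^4*iq_^2*ε + (32)*Ld^6*Lq^3*α40*α22^2*id_^5*iq_^2*ε + (-32)*Ld^6*Lq^4*α12^2*α40*α22*id_^5*iq_^2*ε^2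 + (-48)*Ld^6*Lq^4*α12^2*α40^2*id_^3*iq_^4*ε^2 + (-48)*Ld^6*Lq^4*α30*α12*α22^2*id_^5*iq_^2*ε^2 + (-144)*Ld^6*Lq^4*α30*α12*α40*α22*id_^3*iq_^4*ε^2 + (-16)*Ld^6*Lq^6*α22^4*id_^5*iq_^4*ε^2 + (-128)*Ld^6*Lq^6*α40*α22^2*α04*id_^5*iq_^4*ε^2 + (-32)*Ld^6*Lq^6*α40*α22^3*id_^3*iq_^6*ε^2 + (180)*Ld^7*α30^2*α40*id_^5*ε + (192)*Ld^7*Lq^2*α40^2*α22*id_^5*iq_^2*ε + (-108)*Ld^7*Lq^2*α30^2*α12*α40*id_^4*iq_^2*ε^2 + (-64)*Ld^7*Lq^4*α12*α40*α22^2*id_^6*iq_^2*ε^2 + (-192)*Ld^7*Lq^4*α12*α40^2*α22*id_^4*iq_^4*ε^2 + (-24)*Ld^7*Lq^4*α30*α22^3*id_^6*iq_^2*ε^2 + (-144)*Ld^7*Lq^4*α30*α40*α22^2*id_^4*iq_^4*ε^2 + (336)*Ld^8*α30*α40^2*id_^6*ε + (-288)*Ld^8*Lq^2*α30*α12*α40^2*id_^5*iq_^2*ε^2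 + (-216)*Ld^8*Lq^2*α30^2*α40*α22*id_^5*iq_^2*ε^2 + (-32)*Ld^8*Lq^4*α40*α22^3*id_^7*iq_^2*ε^2 + (-192)*Ld^8*Lq^4*α40^2*α22^2*id_^5*iq_^4*ε^2 + (192)*Ld^9*α40^3*id_^7*ε + (-108)*Ld^9*α30^3*α40*id_^6*ε^2 + (-192)*Ld^9*Lq^2*α12*α40^3*id_^6*iq_^2*ε^2 + (-576)*Ld^9*Lq^2*α30*α40^2*α22*id_^6*iq_^2*ε^2 + (-432)*Ld^10*α30^2*α40^2*id_^7*ε^2 + (-384)*Ld^10*Lq^2*α40^3*α22*id_^7*iq_^2*ε^2 + (-576)*Ld^11*α30*α40^3*id_^8*ε^2 + (-256)*Ld^12*α40^4*id_^9*ε^2 with hgd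
  set gq : ℝ → ℝ := fun ε => (-48)*Lq^6*α04^2*iq_^5 + (192)*Lq^9*α04^3*iq_^7*ε + (-256)*Lq^12*α04^4*iq_^9*ε^2 + (-2)*Ld*Lq^3*α12^2*iq_^3 + (-32)*Ld*Lq^4*α12*α04*id_*iq_^3 + (8)*Ld*Lq^6*α12^2*α04*iq_^5*ε + (192)*Ld*Lq^7*α12*α04^2*id_*iq_^5*ε + (-384)*Ld*Lq^10*α12*α04^3*id_*iq_^7*ε^2 + (-4)*Ld^2*Lq^2*α12^2*id_^2*iq_ + (-8)*Ld^2*Lq^3*α12*α22*id_*iq_^3 + (-32)*Ld^2*Lq^4*α22*α04*id_^2*iq_^3 + (4)*Ld^2*Lq^4*α12^3*id_*iq_^3*ε + (48)*Ld^2*Lq^5*α12^2*α04*id_^2*iq_^3*ε + (2)*Ld^2*Lq^5*α12^2*α22*iq_^5*ε + (32)*Ld^2*Lq^6*α12*α22*α04*id_*iq_^5*ε + (192)*Ld^2*Lq^7*α22*α04^2*id_^2*iq_^5*ε + (-192)*Ld^2*Lq^8*α12^2*α04^2*id_^2*iq_^5*ε^2 + (-8)*Ld^2*Lq^8*α12^2*α22*α04*iq_^7*ε^2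 + (-384)*Ld^2*Lq^10*α22*α04^3*id_^2*iq_^7*ε^2 + (-6)*Ld^3*Lq*α30*α12*id_^2*iq_ + (-8)*Ld^3*Lq^2*α12*α22*id_^3*iq_ + (-8)*Ld^3*Lq^3*α22^2*id_^2*iq_^3 + (20)*Ld^3*Lq^4*α12^2*α22*id_^2*iq_^3*ε + (24)*Ld^3*Lq^4*α30*α12*α04*id_^2*iq_^3*ε + (96)*Ld^3*Lq^5*α12*α22*α04*id_^3*iq_^3*ε + (8)*Ld^3*Lq^5*α12*α22^2*id_*iq_^5*ε + (32)*Ld^3*Lq^6*α22^2*α04*id_^2*iq_^5*ε + (-32)*Ld^3*Lq^6*α12^3*α04*id_^3*iq_^3*ε^2 + (-4)*Ld^3*Lq^6*α12^3*α22*id_*iq_^5*ε^2 + (-384)*Ld^3*Lq^8*α12*α22*α04^2*id_^3*iq_^5*ε^2 + (-32)*Ld^3*Lq^8*α12*α22^2*α04*id_*iq_^7*ε^2 + (-8)*Ld^4*Lq*α12*α40*id_^3*iq_ + (-12)*Ld^4*Lq*α30*α22*id_^3*iq_ + (-4)*Ld^4*Lq^2*α22^2*id_^4*iq_ + (12)*Ld^4*Lq^2*α30*α12^2*id_^3*iq_*ε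 + (12)*Ld^4*Lq^3*α30*α12*α22*id_^2*iq_^3*ε + (32)*Ld^4*Lq^4*α12*α22^2*id_^3*iq_^3*ε + (32)*Ld^4*Lq^4*α12*α40*α04*id_^3*iq_^3*ε + (48)*Ld^4*Lq^4*α30*α22*α04*id_^3*iq_^3*ε + (48)*Ld^4*Lq^5*α22^2*α04*id_^4*iq_^3*ε + (8)*Ld^4*Lq^5*α22^3*id_^2*iq_^5*ε + (-96)*Ld^4*Lq^6*α12^2*α22*α04*id_^4*iq_^3*ε^2 + (-20)*Ld^4*Lq^6*α12^2*α22^2*id_^2*iq_^5*ε^2 + (-48)*Ld^4*Lq^6*α30*α12*α22*α04*id_^2*iq_^5*ε^2 + (-192)*Ld^4*Lq^8*α22^2*α04^2*id_^4*iq_^5*ε^2 + (-32)*Ld^4*Lq^8*α22^3*α04*id_^2*iq_^7*ε^2 + (-16)*Ld^5*Lq*α40*α22*id_^4*iq_ + (16)*Ld^5*Lq^2*α12^2*α40*id_^4*iq_*ε + (36)*Ld^5*Lq^2*α30*α12*α22*id_^4*iq_*ε + (16)*Ld^5*Lq^3*α12*α40*α22*id_^3*iq_^3*ε + (24)*Ld^5*Lq^3*α30*α22^2*id_^3*iq_^3*ε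 + (16)*Ld^5*Lq^4*α22^3*id_^4*iq_^3*ε + (64)*Ld^5*Lq^4*α40*α22*α04*id_^4*iq_^3*ε + (-24)*Ld^5*Lq^4*α30*α12^2*α22*id_^3*iq_^3*ε^2 + (-96)*Ld^5*Lq^6*α12*α22^2*α04*id_^5*iq_^3*ε^2 + (-32)*Ld^5*Lq^6*α12*α22^3*id_^3*iq_^5*ε^2 + (-64)*Ld^5*Lq^6*α12*α40*α22*α04*id_^3*iq_^5*ε^2 + (-96)*Ld^5*Lq^6*α30*α22^2*α04*id_^3*iq_^5*ε^2 + (18)*Ld^6*Lq*α30^2*α22*id_^4*iq_*ε + (48)*Ld^6*Lq^2*α12*α40*α22*id_^5*iq_*ε + (24)*Ld^6*Lq^2*α30*α22^2*id_^5*iq_*ε + (32)*Ld^6*Lq^3*α40*α22^2*id_^4*iq_^3*ε + (-32)*Ld^6*Lq^4*α12^2*α40*α22*id_^4*iq_^3*ε^2 + (-72)*Ld^6*Lq^4*α30*α12*α22^2*id_^4*iq_^3*ε^2 + (-72)*Ld^6*Lq^4*α30^2*α22*α04*id_^4*iq_^3*ε^2 + (-32)*Ld^6*Lq^6*α22^3*α04*id_^6*iq_^3*ε^2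 + (-16)*Ld^6*Lq^6*α22^4*id_^4*iq_^5*ε^2 + (-128)*Ld^6*Lq^6*α40*α22^2*α04*id_^4*iq_^5*ε^2 + (48)*Ld^7*Lq*α30*α40*α22*id_^5*iq_*ε + (32)*Ld^7*Lq^2*α40*α22^2*id_^6*iq_*ε + (-36)*Ld^7*Lq^2*α30^2*α12*α22*id_^5*iq_*ε^2 + (-96)*Ld^7*Lq^4*α12*α40*α22^2*id_^5*iq_^3*ε^2 + (-48)*Ld^7*Lq^4*α30*α22^3*id_^5*iq_^3*ε^2 + (-192)*Ld^7*Lq^4*α30*α40*α22*α04*id_^5*iq_^3*ε^2 + (32)*Ld^8*Lq*α40^2*α22*id_^6*iq_*ε + (-96)*Ld^8*Lq^2*α30*α12*α40*α22*id_^6*iq_*ε^2 + (-36)*Ld^8*Lq^2*α30^2*α22^2*id_^6*iq_*ε^2 + (-64)*Ld^8*Lq^4*α40*α22^3*id_^6*iq_^3*ε^2 + (-128)*Ld^8*Lq^4*α40^2*α22*α04*id_^6*iq_^3*ε^2 + (-64)*Ld^9*Lq^2*α12*α40^2*α22*id_^7*iq_*ε^2 + (-96)*Ld^9*Lq^2*α30*α40*α22^2*id_^7*iq_*ε^2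 + (-64)*Ld^10*Lq^2*α40^2*α22^2*id_^8*iq_*ε^2 with hgq
  have hgd' : Differentiable ℝ gd := by rw [hgd]; fun_prop
  have hgq' : Differentiable ℝ gq := by rw [hgq]; fun_prop
  constructor
  · refine quad_aux (f := fun ε => Id_ ε (φd ε) (φq ε) - id_) hgd' fun ε => ?_
    simp only [hId, hφd, hφq, hgd]
    field_simp
    ring
  · refine quad_aux (f := fun ε => Iq_ ε (φd ε) (φq ε) - iq_) hgq' fun ε => ?_
    simp only [hIq, hφd, hφq, hgq]
    field_simp
    ring
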